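/- Let f : ℝⁿ → ℝ be measurable, nonnegative, and positively homogeneous of degree d > 0 (d ∈ ℝ), with bounded sublevel set G = {x : f(x) ≤ 1}. Then for every k ∈ ℕ and every multi-index α ∈ ℕⁿ, ∫_G x^α f(x)^k dx = ((n + |α|)/(n + kd + |α|)) ∫_G x^α dx, where the integrals are with respect to Lebesgue measure. -/

import Mathlib

open MeasureTheory

open Set Pointwise

lemma scale_lemma (n : ℕ) (d : ℝ) (hd : 0 < d)
    (f : (Fin n → ℝ) → ℝ)
    (hhom : ∀ c : ℝ, 0 < c → ∀ x, f (c • x) = c ^ d * f x)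
    (α : Fin n → ℕ) {t : ℝ} (ht : 0 < t) :
    ∫ x in {x : Fin n → ℝ | f x ≤ t}, ∏ i, x i ^ α i
      = t ^ (((n : ℝ) + ∑ i, (α i : ℝ)) / d) *
        ∫ x in {x : Fin n → ℝ | f x ≤ 1}, ∏ i, x i ^ α i := by
  set c : ℝ := t ^ (1 / d) with hc_def
  have hc : 0 < c := Real.rpow_pos_of_pos ht _
  have hcd : c ^ d = t := by
    rw [hc_def, ← Real.rpow_mul ht.le, one_div_mul_cancel hd.ne', Real.rpow_one]
  have hset : c • {x : Fin n → ℝ | f x ≤ 1} = {x : Fin n → ℝ | f x ≤ t} := by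
    ext x
    rw [mem_smul_set_iff_inv_smul_mem₀ hc.ne', mem_setOf_eq, mem_setOf_eq,
      hhom c⁻¹ (inv_pos.2 hc), Real.inv_rpow hc.le, hcd, inv_mul_eq_div, div_le_one ht]
  have key := MeasureTheory.Measure.setIntegral_comp_smul_of_pos volume
    (fun x : Fin n → ℝ => ∏ i, x i ^ α i) {x : Fin n → ℝ | f x ≤ 1} hc
  have hg : ∀ x : Fin n → ℝ, (∏ i, (c • x) i ^ α i) = c ^ (∑ i, α i) * ∏ i, x i ^ α i := by
    intro x
    simp only [Pi.smul_apply, smul_eq_mul, mul_pow, Finset.prod_mul_distrib,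
      Finset.prod_pow_eq_pow_sum]
  simp only [hg, hset, Module.finrank_fin_fun, smul_eq_mul] at key
  rw [integral_const_mul] at key
  have hcn : (c : ℝ) ^ n ≠ 0 := pow_ne_zero _ hc.ne'
  have key2 : ∫ x in {x : Fin n → ℝ | f x ≤ t}, ∏ i, x i ^ α i
      = c ^ n * (c ^ (∑ i, α i) * ∫ x in {x : Fin n → ℝ | f x ≤ 1}, ∏ i, x i ^ α i) := by
    rw [key, ← mul_assoc, mul_inv_cancel₀ hcn, one_mul]
  rw [key2, ← mul_assoc, ← pow_add]
  congr 1
  rw [← Real.rpow_natCast c (n + ∑ i, α i), hc_def, ← Real.rpow_mul ht.le]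
  congr 1
  push_cast
  field_simp

/-- Main integral identity: for `f` measurable, nonnegative, positively homogeneous of
degree `d > 0` with bounded sublevel set `G = {f ≤ 1}`, for all `k` and multi-indices `α`,
`∫_G x^α f(x)^k dx = ((n+|α|)/(n+kd+|α|)) ∫_G x^α dx`. -/
theorem moment_identity (n : ℕ) (hn : 0 < n) (d : ℝ) (hd : 0 < d)
    (f : (Fin n → ℝ) → ℝ) (hmeas : Measurable f) (hpos : ∀ x, 0 ≤ f x)
    (hhom : ∀ c : ℝ, 0 < c → ∀ x, f (c • x) = c ^ d * f x)
    (hbdd : Bornology.IsBounded {x : Fin n → ℝ | f x ≤ 1}) :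
    ∀ (k : ℕ) (α : Fin n → ℕ),
      ∫ x in {x : Fin n → ℝ | f x ≤ 1}, (∏ i, x i ^ α i) * f x ^ k =
        (((n : ℝ) + ∑ i, (α i : ℝ)) / ((n : ℝ) + k * d + ∑ i, (α i : ℝ))) *
          ∫ x in {x : Fin n → ℝ | f x ≤ 1}, ∏ i, x i ^ α i := by
  intro k α
  -- notation
  set G : Set (Fin n → ℝ) := {x : Fin n → ℝ | f x ≤ 1} with hG_def
  set g : (Fin n → ℝ) → ℝ := fun x => ∏ i, x i ^ α i with hg_def
  set s : ℝ := ∑ i, (α i : ℝ) with hs_def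
  have hs_nonneg : 0 ≤ s := Finset.sum_nonneg fun i _ => Nat.cast_nonneg _
  have hns : 0 < (n : ℝ) + s := by positivity
  rcases Nat.eq_zero_or_pos k with rfl | hk
  · simp only [pow_zero, mul_one, Nat.cast_zero, zero_mul, add_zero]
    rw [div_self hns.ne', one_mul]
  obtain ⟨m, rfl⟩ : ∃ m, k = m + 1 := ⟨k - 1, (Nat.succ_pred_eq_of_pos hk).symm⟩
  set k := m + 1
  set p : ℝ := ((n : ℝ) + s) / d with hp_def
  have hp : 0 < p := div_pos hns hd
  have hGmeas : MeasurableSet G := measurableSet_le hmeas measurable_const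
  have hg_cont : Continuous g := continuous_finset_prod _ fun i _ => (continuous_apply i).pow _
  have hint_g : IntegrableOn g G volume :=
    (hg_cont.continuousOn.integrableOn_compact
      (Metric.isCompact_of_isClosed_isBounded isClosed_closure hbdd.closure)).mono_set
      subset_closure
  set M : ℝ := ∫ x in G, g x with hM_def
  -- pointwise layer-cake in one dimension
  have hpoint : ∀ cc : ℝ, 0 ≤ cc → cc ≤ 1 →
      ∫ t in Ioo (0:ℝ) 1, ((k : ℝ) * t ^ m) * (if t < cc then (1:ℝ) else 0) = cc ^ k := by
    intro cc h0 h1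
    have hind : ∀ t : ℝ, ((k : ℝ) * t ^ m) * (if t < cc then (1:ℝ) else 0)
        = Set.indicator (Iio cc) (fun t => (k : ℝ) * t ^ m) t := by
      intro t
      rw [Set.indicator_apply]
      by_cases h : t < cc <;> simp [h, mem_Iio]
    simp_rw [hind]
    rw [setIntegral_indicator measurableSet_Iio, Set.Ioo_inter_Iio, min_eq_right h1,
      ← integral_Ioc_eq_integral_Ioo, ← intervalIntegral.integral_of_le h0,
      intervalIntegral.integral_const_mul, integral_pow]
    have : ((m : ℝ) + 1) ≠ 0 := by positivity
    field_simp
    simp only [k]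
    push_cast
    ring
  -- the two-variable function
  set F : (Fin n → ℝ) → ℝ → ℝ :=
    fun x t => g x * (((k : ℝ) * t ^ m) * (if t < f x then (1:ℝ) else 0)) with hF_def
  have hFmeas : Measurable (Function.uncurry F) := by
    apply Measurable.mul
    · exact (hg_cont.measurable.comp measurable_fst)
    apply Measurable.mul
    · exact ((measurable_snd.pow_const m).const_mul _)
    · exact Measurable.ite (measurableSet_lt measurable_snd (hmeas.comp measurable_fst))
        measurable_const measurable_const
  have hFint : Integrable (Function.uncurry F) ((volume.restrict G).prod (volume.restrict (Ioo (0:ℝ) 1))) := by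
    have h2 : Integrable (fun t : ℝ => (k : ℝ) * |t| ^ m) (volume.restrict (Ioo (0:ℝ) 1)) := by
      have hc2 : Continuous (fun t : ℝ => (k : ℝ) * |t| ^ m) :=
        continuous_const.mul (continuous_abs.pow m)
      exact (hc2.integrableOn_Icc (a := (0:ℝ)) (b := 1)).mono_set Ioo_subset_Icc_self
    have hBint := Integrable.mul_prod hint_g.abs h2
    apply hBint.mono' hFmeas.aestronglyMeasurable
    apply ae_of_all
    rintro ⟨x, t⟩
    simp only [Function.uncurry, hF_def, Real.norm_eq_abs]
    have hin : |(↑k * t ^ m) * (if t < f x then (1:ℝ) else 0)| ≤ (k:ℝ) * |t| ^ m := by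
      have h1 : |if t < f x then (1:ℝ) else 0| ≤ 1 := by by_cases h : t < f x <;> simp [h]
      rw [abs_mul, abs_mul, abs_pow, Nat.abs_cast]
      calc (k:ℝ) * |t| ^ m * |if t < f x then (1:ℝ) else 0| ≤ (k:ℝ) * |t| ^ m * 1 := by
            gcongr
        _ = (k:ℝ) * |t| ^ m := mul_one _
    rw [abs_mul]
    exact mul_le_mul_of_nonneg_left hin (abs_nonneg _)
  -- Step A : rewrite LHS as double integral
  have stepA : ∫ x in G, g x * f x ^ k = ∫ x in G, ∫ t in Ioo (0:ℝ) 1, F x t := by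
    apply setIntegral_congr_fun hGmeas
    intro x hx
    rw [hF_def]
    simp only
    rw [integral_const_mul, hpoint (f x) (hpos x) hx]
  -- Step C : inner integral in x
  have stepC : ∀ t ∈ Ioo (0:ℝ) 1, ∫ x in G, F x t
      = (k : ℝ) * t ^ m * (M - t ^ p * M) := by
    intro t ht
    have hSmeas : MeasurableSet {x : Fin n → ℝ | f x ≤ t} := measurableSet_le hmeas measurable_const
    have hsub : {x : Fin n → ℝ | f x ≤ t} ⊆ G := fun x hx => le_trans hx ht.2.le
    have hptw : ∀ x, F x t = ((k : ℝ) * t ^ m) *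
        (g x - Set.indicator {x : Fin n → ℝ | f x ≤ t} g x) := by
      intro x
      rw [hF_def, Set.indicator_apply]
      simp only
      by_cases h : t < f x
      · rw [if_pos h, if_neg (by simpa using not_le.2 h)]
        ring
      · rw [if_neg h, if_pos (by simpa using not_lt.1 h)]
        ring
    simp_rw [hptw]
    rw [integral_const_mul, integral_sub hint_g (hint_g.indicator hSmeas),
      setIntegral_indicator hSmeas, Set.inter_eq_self_of_subset_right hsub]
    have := scale_lemma n d hd f hhom α ht.1
    rw [hG_def, hg_def, hM_def]
    rw [this]
  rw [show (∫ x in G, (∏ i, x i ^ α i) * f x ^ k) = ∫ x in G, g x * f x ^ k from rfl, stepA,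
    integral_integral_swap hFint, setIntegral_congr_fun measurableSet_Ioo stepC]
  -- Step D : compute the t-integral
  have hq : (-1 : ℝ) < (m : ℝ) + p := by
    have : (0:ℝ) ≤ (m : ℝ) := Nat.cast_nonneg m
    linarith
  have hint1 : IntegrableOn (fun t : ℝ => M * ((k:ℝ) * t ^ m)) (Ioo (0:ℝ) 1) volume :=
    ((continuous_const.mul (continuous_const.mul (continuous_pow m))).integrableOn_Icc
      (a := (0:ℝ)) (b := 1)).mono_set Ioo_subset_Icc_self
  have hint2 : IntegrableOn (fun t : ℝ => ((k:ℝ) * M) * t ^ ((m : ℝ) + p)) (Ioo (0:ℝ) 1) volume := by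
    have h1 : IntervalIntegrable (fun t : ℝ => t ^ ((m : ℝ) + p)) volume 0 1 :=
      intervalIntegral.intervalIntegrable_rpow' hq
    have h2 := (intervalIntegrable_iff_integrableOn_Ioc_of_le (zero_le_one' ℝ)).1 h1
    exact (h2.mono_set Ioo_subset_Ioc_self).const_mul _
  have hptw2 : ∀ t ∈ Ioo (0:ℝ) 1, (k : ℝ) * t ^ m * (M - t ^ p * M)
      = M * ((k:ℝ) * t ^ m) - ((k:ℝ) * M) * t ^ ((m : ℝ) + p) := by
    intro t ht
    rw [Real.rpow_add ht.1, Real.rpow_natCast]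
    ring
  rw [setIntegral_congr_fun measurableSet_Ioo hptw2, integral_sub hint1 hint2]
  have e1 : ∫ t in Ioo (0:ℝ) 1, M * ((k:ℝ) * t ^ m) = M := by
    rw [integral_const_mul]
    have h1 : ∫ t in Ioo (0:ℝ) 1, (k:ℝ) * t ^ m = 1 := by
      rw [← integral_Ioc_eq_integral_Ioo, ← intervalIntegral.integral_of_le (zero_le_one' ℝ),
        intervalIntegral.integral_const_mul, integral_pow, one_pow,
        zero_pow (Nat.succ_ne_zero m), sub_zero]
      have : ((m : ℝ) + 1) ≠ 0 := by positivity
      simp only [k]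
      push_cast
      field_simp
    rw [h1, mul_one]
  have e2 : ∫ t in Ioo (0:ℝ) 1, ((k:ℝ) * M) * t ^ ((m : ℝ) + p)
      = ((k:ℝ) * M) * (1 / ((m : ℝ) + p + 1)) := by
    rw [integral_const_mul]
    have h2 : ∫ t in Ioo (0:ℝ) 1, t ^ ((m : ℝ) + p) = 1 / ((m : ℝ) + p + 1) := by
      rw [← integral_Ioc_eq_integral_Ioo, ← intervalIntegral.integral_of_le (zero_le_one' ℝ),
        integral_rpow (Or.inl hq), Real.one_rpow, Real.zero_rpow (by positivity)]
      ring
    rw [h2]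
  rw [e1, e2]
  -- final algebra
  have hkc : ((k : ℕ) : ℝ) = (m : ℝ) + 1 := by simp only [k]; push_cast; ring
  have hd' : d ≠ 0 := hd.ne'
  have h3 : (m : ℝ) + ((n : ℝ) + s) / d + 1 ≠ 0 := by positivity
  have h4 : (n : ℝ) + ((m : ℝ) + 1) * d + s ≠ 0 := by positivity
  have hcoef : 1 - (k : ℝ) * (1 / ((m : ℝ) + p + 1))
      = ((n : ℝ) + s) / ((n : ℝ) + (k : ℝ) * d + s) := by
    rw [hkc, hp_def]
    field_simp
    ring
  linear_combination M * hcoef
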